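/- Assume ψ > ψ*(0) := min_{c∈ℝ} F₀(c,1)². Suppose (c₁,c₂,s) ∈ ℝ³ satisfies the system of equations −c₁ = E_{Q∞}[(ψ^{1/2}G + A·W)·W·X^{1/2}/D], c₁² + c₂² = E_{Q∞}[(ψ^{1/2}G + A·W)²·X/D²], 1 = E_{Q∞}[(ψ^{1/2}G + A·W)²/D²], where A = ∂₁F_κ(c₁,c₂) − c₁c₂^{−1}∂₂F_κ(c₁,c₂) and D = c₂^{−1}∂₂F_κ(c₁,c₂)·X^{1/2} + ψ^{1/2}·s·X^{−1/2}, and suppose c₂ ≠ 0. Then s ≠ 0. -/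

import Mathlib

open MeasureTheory ProbabilityTheory Real Filter Set Topology Asymptotics
open scoped ENNReal NNReal
set_option maxHeartbeats 1000000

noncomputable section

namespace MaxMargin

/-- The standard Gaussian measure on `ℝ`. -/
def stdG : Measure ℝ := gaussianReal 0 1

/-- The function `F_κ(c₁,c₂) = (E[((κ − c₁·Y·G − c₂·Z)₊)²])^{1/2}` where `G, Z` are independent
standard Gaussians and, conditionally on `G`, `Y ∈ {+1,−1}` with `P(Y = +1 | G) = f(G)`. -/
def Fk (f : ℝ → ℝ) (κ c₁ c₂ : ℝ) : ℝ :=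
  Real.sqrt (∫ g, ∫ z,
    (f g * (max (κ - c₁ * g - c₂ * z) 0) ^ 2
      + (1 - f g) * (max (κ + c₁ * g - c₂ * z) 0) ^ 2) ∂stdG ∂stdG)

/-- Non-degeneracy of `f`: the variable `T = Y·G` satisfies `P(T < x) > 0` and `P(T > x) > 0`
for every `x ∈ ℝ`. -/
def NonDeg (f : ℝ → ℝ) : Prop :=
  ∀ x : ℝ,
    (0 < ∫ g, (f g * (if g < x then (1:ℝ) else 0)
          + (1 - f g) * (if -g < x then (1:ℝ) else 0)) ∂stdG) ∧
    (0 < ∫ g, (f g * (if x < g then (1:ℝ) else 0)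
          + (1 - f g) * (if x < -g then (1:ℝ) else 0)) ∂stdG)


/-- Points of `ℝ³` carrying the coordinates `(G, X, W)`. -/
abbrev Pt : Type := ℝ × ℝ × ℝ

/-- First coordinate `G`. -/
def Gc : Pt → ℝ := fun q => q.1

/-- Second coordinate `X`. -/
def Xc : Pt → ℝ := fun q => q.2.1

/-- Third coordinate `W`. -/
def Wc : Pt → ℝ := fun q => q.2.2

/-- The inner product `⟨h₁,h₂⟩_P = E_P[h₁h₂]`. -/
def ip (P : Measure Pt) (h₁ h₂ : Pt → ℝ) : ℝ := ∫ q, h₁ q * h₂ q ∂P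

/-- The norm `‖h‖_P = ⟨h,h⟩_P^{1/2}`. -/
def pnorm (P : Measure Pt) (h : Pt → ℝ) : ℝ := Real.sqrt (ip P h h)

/-- Projection onto the orthogonal complement of `W`: `Π_{W⊥}(h) = h − ⟨h,W⟩_P·W`. -/
def projW (P : Measure Pt) (h : Pt → ℝ) : Pt → ℝ := fun q => h q - ip P h Wc * Wc q

/-- Partial derivative of `F_κ` in its first argument. -/
def d1F (f : ℝ → ℝ) (κ c₁ c₂ : ℝ) : ℝ := deriv (fun t => Fk f κ t c₂) c₁

/-- Partial derivative of `F_κ` in its second argument. -/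
def d2F (f : ℝ → ℝ) (κ c₁ c₂ : ℝ) : ℝ := deriv (fun t => Fk f κ c₁ t) c₂

/-- `ψ*(0) = min_{c ∈ ℝ} F₀(c,1)²`. -/
def psiStar0 (f : ℝ → ℝ) : ℝ := ⨅ c : ℝ, (Fk f 0 c 1) ^ 2

/-- The functional `𝓡_{ψ,κ,P}(h) = ψ^{−1/2}·F_κ(⟨h, X^{1/2}W⟩_P, ‖Π_{W⊥}(X^{1/2}h)‖_P)
+ ⟨h, X^{1/2}·Π_{W⊥}(G)⟩_P`. -/
def Rfun (f : ℝ → ℝ) (P : Measure Pt) (ψ κ : ℝ) (h : Pt → ℝ) : ℝ :=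
  (Real.sqrt ψ)⁻¹ *
      Fk f κ (ip P h (fun q => Real.sqrt (Xc q) * Wc q))
        (pnorm P (projW P (fun q => Real.sqrt (Xc q) * h q)))
    + ip P h (fun q => Real.sqrt (Xc q) * projW P Gc q)

/-- `ζ(P) = ‖X^{−1/2}W‖_P^{−1}`. -/
def zetaP (P : Measure Pt) : ℝ := (pnorm P (fun q => (Real.sqrt (Xc q))⁻¹ * Wc q))⁻¹

/-- The system of equations on `Q∞ = N(0,1) ⊗ μ`, where `Π_{W⊥}(G) = G`:
with `A = ∂₁F_κ(c₁,c₂) − c₁c₂⁻¹∂₂F_κ(c₁,c₂)` and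
`D = c₂⁻¹∂₂F_κ(c₁,c₂)·X^{1/2} + ψ^{1/2}·s·X^{−1/2}`. -/
def SolSysG (f : ℝ → ℝ) (Q : Measure Pt) (ψ κ c₁ c₂ s : ℝ) : Prop :=
  (-c₁ = ∫ q, (Real.sqrt ψ * Gc q
        + (d1F f κ c₁ c₂ - c₁ * c₂⁻¹ * d2F f κ c₁ c₂) * Wc q) * Wc q * Real.sqrt (Xc q)
      / (c₂⁻¹ * d2F f κ c₁ c₂ * Real.sqrt (Xc q)
          + Real.sqrt ψ * s * (Real.sqrt (Xc q))⁻¹) ∂Q)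
  ∧ (c₁ ^ 2 + c₂ ^ 2 = ∫ q, (Real.sqrt ψ * Gc q
        + (d1F f κ c₁ c₂ - c₁ * c₂⁻¹ * d2F f κ c₁ c₂) * Wc q) ^ 2 * Xc q
      / (c₂⁻¹ * d2F f κ c₁ c₂ * Real.sqrt (Xc q)
          + Real.sqrt ψ * s * (Real.sqrt (Xc q))⁻¹) ^ 2 ∂Q)
  ∧ (1 = ∫ q, (Real.sqrt ψ * Gc q
        + (d1F f κ c₁ c₂ - c₁ * c₂⁻¹ * d2F f κ c₁ c₂) * Wc q) ^ 2
      / (c₂⁻¹ * d2F f κ c₁ c₂ * Real.sqrt (Xc q)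
          + Real.sqrt ψ * s * (Real.sqrt (Xc q))⁻¹) ^ 2 ∂Q)

instance : IsProbabilityMeasure stdG := by unfold stdG; infer_instance

lemma stdG_eq : stdG = MeasureTheory.volume.withDensity (gaussianPDF 0 1) :=
  gaussianReal_of_var_ne_zero 0 one_ne_zero

lemma pdf1_eq (x : ℝ) : gaussianPDFReal 0 1 x = (Real.sqrt (2 * π))⁻¹ * Real.exp (-(1/2) * x ^ 2) := by
  rw [gaussianPDFReal]
  norm_num
  left
  ring_nf

lemma integral_stdG (h : ℝ → ℝ) :
    ∫ x, h x ∂stdG = ∫ x, gaussianPDFReal 0 1 x * h x := by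
  rw [stdG_eq]
  have hm : Measurable (fun x => (gaussianPDFReal 0 1 x).toNNReal) :=
    (measurable_gaussianPDFReal 0 1).real_toNNReal
  have : gaussianPDF 0 1 = fun x => ((gaussianPDFReal 0 1 x).toNNReal : ℝ≥0∞) := by
    funext x; rw [gaussianPDF]; rfl
  rw [this, integral_withDensity_eq_integral_smul hm]
  congr 1
  funext x
  simp [NNReal.smul_def, Real.coe_toNNReal _ (gaussianPDFReal_nonneg 0 1 x)]

lemma integrable_stdG_iff (h : ℝ → ℝ) :
    Integrable h stdG ↔ Integrable (fun x => gaussianPDFReal 0 1 x * h x) := by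
  rw [stdG_eq]
  have hm : Measurable (fun x => (gaussianPDFReal 0 1 x).toNNReal) :=
    (measurable_gaussianPDFReal 0 1).real_toNNReal
  have : gaussianPDF 0 1 = fun x => ((gaussianPDFReal 0 1 x).toNNReal : ℝ≥0∞) := by
    funext x; rw [gaussianPDF]; rfl
  rw [this, integrable_withDensity_iff_integrable_smul hm]
  apply integrable_congr
  refine Filter.Eventually.of_forall (fun x => ?_)
  simp [NNReal.smul_def, Real.coe_toNNReal _ (gaussianPDFReal_nonneg 0 1 x)]

set_option maxHeartbeats 1000000

lemma exp_int : Integrable (fun x : ℝ => rexp (-(1/2) * x ^ 2)) :=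
  integrable_exp_neg_mul_sq (by norm_num)

lemma xexp_int : Integrable (fun x : ℝ => x * rexp (-(1/2) * x ^ 2)) :=
  integrable_mul_exp_neg_mul_sq (by norm_num)

lemma x2exp_int : Integrable (fun x : ℝ => x ^ 2 * rexp (-(1/2) * x ^ 2)) := by
  have hbd : ∀ x : ℝ, ‖x ^ 2 * rexp (-(1/2) * x ^ 2)‖ ≤ 4 * rexp (-(1/4) * x ^ 2) := by
    intro x
    have h1 : x ^ 2 ≤ 4 * rexp ((1/4) * x ^ 2) := by
      nlinarith [Real.add_one_le_exp ((1/4) * x ^ 2)]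
    have h2 : x ^ 2 * rexp (-(1/2) * x ^ 2) ≤ 4 * rexp ((1/4) * x ^ 2) * rexp (-(1/2) * x ^ 2) :=
      mul_le_mul_of_nonneg_right h1 (Real.exp_pos _).le
    have h3 : rexp ((1/4) * x ^ 2) * rexp (-(1/2) * x ^ 2) = rexp (-(1/4) * x ^ 2) := by
      rw [← Real.exp_add]; ring_nf
    rw [Real.norm_of_nonneg (by positivity)]
    calc x ^ 2 * rexp (-(1/2) * x ^ 2) ≤ 4 * rexp ((1/4) * x ^ 2) * rexp (-(1/2) * x ^ 2) := h2
      _ = 4 * rexp (-(1/4) * x ^ 2) := by rw [mul_assoc, h3]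
  refine (Integrable.const_mul (integrable_exp_neg_mul_sq (by norm_num : (0:ℝ) < 1/4)) 4).mono' ?_ (Filter.Eventually.of_forall hbd)
  exact ((continuous_pow 2).mul ((Real.continuous_exp.comp (by fun_prop)))).aestronglyMeasurable

lemma tendsto_lin_atBot : Tendsto (fun x : ℝ => -(1/2) * x) atTop atBot := by
  have h : Tendsto (fun x : ℝ => (1/2) * x) atTop atTop :=
    Tendsto.const_mul_atTop (by norm_num) tendsto_id
  exact (tendsto_neg_atBot_iff.mpr h).congr (fun x => by ring)

lemma tendsto_sq_atTop : Tendsto (fun x : ℝ => x ^ 2) atTop atTop :=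
  tendsto_pow_atTop two_ne_zero

lemma tendsto_sq_atBot : Tendsto (fun x : ℝ => x ^ 2) atBot atTop := by
  have h := tendsto_sq_atTop.comp tendsto_neg_atBot_atTop
  exact h.congr (fun x => by simp [Function.comp_def, neg_sq])

lemma tendsto_exp_sq_top : Tendsto (fun x : ℝ => rexp (-(1/2) * x ^ 2)) atTop (nhds 0) := by
  apply Real.tendsto_exp_atBot.comp
  have h2 : Tendsto (fun x : ℝ => (1/2) * x ^ 2) atTop atTop :=
    Tendsto.const_mul_atTop (by norm_num) tendsto_sq_atTop
  exact (tendsto_neg_atBot_iff.mpr h2).congr (fun x => by ring)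

lemma tendsto_exp_sq_bot : Tendsto (fun x : ℝ => rexp (-(1/2) * x ^ 2)) atBot (nhds 0) := by
  apply Real.tendsto_exp_atBot.comp
  have h2 : Tendsto (fun x : ℝ => (1/2) * x ^ 2) atBot atTop :=
    Tendsto.const_mul_atTop (by norm_num) tendsto_sq_atBot
  exact (tendsto_neg_atBot_iff.mpr h2).congr (fun x => by ring)

lemma integral_xexp : ∫ x : ℝ, x * rexp (-(1/2) * x ^ 2) = 0 := by
  have hderiv : ∀ x : ℝ, HasDerivAt (fun y : ℝ => -rexp (-(1/2) * y ^ 2)) (x * rexp (-(1/2) * x ^ 2)) x := by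
    intro x
    have h1 : HasDerivAt (fun y : ℝ => -(1/2) * y ^ 2) (-x) x := by
      simpa using ((hasDerivAt_pow 2 x).const_mul (-(1/2) : ℝ))
    have := (h1.exp).neg
    refine this.congr_deriv ?_
    ring
  have := integral_of_hasDerivAt_of_tendsto hderiv xexp_int (tendsto_exp_sq_bot.neg) (tendsto_exp_sq_top.neg)
  simpa using this

lemma tendsto_xexp_top : Tendsto (fun x : ℝ => x * rexp (-(1/2) * x ^ 2)) atTop (nhds 0) := by
  have h := rpow_mul_exp_neg_mul_sq_isLittleO_exp_neg (by norm_num : (0:ℝ) < 1/2) 1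
  have h2 : Tendsto (fun x : ℝ => rexp (-(1/2) * x)) atTop (nhds 0) :=
    Real.tendsto_exp_atBot.comp tendsto_lin_atBot
  have h3 := h.trans_tendsto h2
  exact h3.congr (fun x => by rw [Real.rpow_one])

lemma integral_x2exp : ∫ x : ℝ, x ^ 2 * rexp (-(1/2) * x ^ 2) = Real.sqrt (2 * π) := by
  have hderiv : ∀ x : ℝ, HasDerivAt (fun y : ℝ => -y * rexp (-(1/2) * y ^ 2))
      (x ^ 2 * rexp (-(1/2) * x ^ 2) - rexp (-(1/2) * x ^ 2)) x := by
    intro x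
    have h1 : HasDerivAt (fun y : ℝ => -(1/2) * y ^ 2) (-x) x := by
      simpa using ((hasDerivAt_pow 2 x).const_mul (-(1/2) : ℝ))
    have h2 := (hasDerivAt_id x).neg.mul h1.exp
    refine h2.congr_deriv ?_
    simp only [Pi.neg_apply, id_eq]
    ring
  have hint : Integrable (fun x : ℝ => x ^ 2 * rexp (-(1/2) * x ^ 2) - rexp (-(1/2) * x ^ 2)) :=
    x2exp_int.sub exp_int
  have hb : Tendsto (fun x : ℝ => -x * rexp (-(1/2) * x ^ 2)) atBot (nhds 0) := by
    have h := tendsto_xexp_top.comp tendsto_neg_atBot_atTop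
    exact h.congr (fun x => by simp [Function.comp_def, neg_sq])
  have ht : Tendsto (fun x : ℝ => -x * rexp (-(1/2) * x ^ 2)) atTop (nhds 0) := by
    have := tendsto_xexp_top.neg
    simp only [neg_zero] at this
    exact this.congr (fun x => by ring)
  have h0 := integral_of_hasDerivAt_of_tendsto hderiv hint hb ht
  simp only [sub_zero] at h0
  have hsplit := integral_sub x2exp_int exp_int
  have hg : ∫ x : ℝ, rexp (-(1/2) * x ^ 2) = Real.sqrt (2 * π) := by
    have h := integral_gaussian (1/2)
    simp only [neg_mul] at h ⊢
    rw [h]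
    congr 1
    rw [div_div_eq_mul_div, mul_comm]
    norm_num
  rw [hsplit, hg] at h0
  linarith [h0]



lemma sqrt_two_pi_pos : 0 < Real.sqrt (2 * π) := Real.sqrt_pos.mpr (by positivity)

lemma integrable_id_stdG : Integrable (fun x : ℝ => x) stdG := by
  rw [integrable_stdG_iff]
  have : (fun x : ℝ => gaussianPDFReal 0 1 x * x)
      = fun x => (Real.sqrt (2 * π))⁻¹ * (x * rexp (-(1/2) * x ^ 2)) := by
    funext x; rw [pdf1_eq]; ring
  rw [this]
  exact xexp_int.const_mul _

lemma integrable_sq_stdG : Integrable (fun x : ℝ => x ^ 2) stdG := by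
  rw [integrable_stdG_iff]
  have : (fun x : ℝ => gaussianPDFReal 0 1 x * x ^ 2)
      = fun x => (Real.sqrt (2 * π))⁻¹ * (x ^ 2 * rexp (-(1/2) * x ^ 2)) := by
    funext x; rw [pdf1_eq]; ring
  rw [this]
  exact x2exp_int.const_mul _

lemma integral_id_stdG : ∫ x, x ∂stdG = 0 := by
  rw [integral_stdG]
  have : (fun x : ℝ => gaussianPDFReal 0 1 x * x)
      = fun x => (Real.sqrt (2 * π))⁻¹ * (x * rexp (-(1/2) * x ^ 2)) := by
    funext x; rw [pdf1_eq]; ring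
  rw [this, integral_const_mul, integral_xexp, mul_zero]

lemma integral_sq_stdG : ∫ x, x ^ 2 ∂stdG = 1 := by
  rw [integral_stdG]
  have : (fun x : ℝ => gaussianPDFReal 0 1 x * x ^ 2)
      = fun x => (Real.sqrt (2 * π))⁻¹ * (x ^ 2 * rexp (-(1/2) * x ^ 2)) := by
    funext x; rw [pdf1_eq]; ring
  rw [this, integral_const_mul, integral_x2exp]
  exact inv_mul_cancel₀ (ne_of_gt sqrt_two_pi_pos)


lemma max_sq_le (t : ℝ) : (max t 0)^2 ≤ t^2 := by
  rcases le_total t 0 with h | h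
  · rw [max_eq_right h]; simpa using sq_nonneg t
  · rw [max_eq_left h]

lemma hasDerivAt_max_sq (u : ℝ) : HasDerivAt (fun y : ℝ => (max y 0)^2) (2 * max u 0) u := by
  rcases lt_trichotomy u 0 with hu | hu | hu
  · have h0 : (fun y : ℝ => (max y 0)^2) =ᶠ[nhds u] (fun _ => (0:ℝ)) := by
      filter_upwards [Iio_mem_nhds hu] with y hy
      rw [max_eq_right (le_of_lt hy)]; norm_num
    have := (hasDerivAt_const u (0:ℝ)).congr_of_eventuallyEq h0
    simpa [max_eq_right hu.le] using this
  · subst hu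
    rw [hasDerivAt_iff_isLittleO]
    rw [Asymptotics.isLittleO_iff]
    intro c hc
    filter_upwards [Metric.ball_mem_nhds (0:ℝ) hc] with y hy
    simp only [Metric.mem_ball, Real.dist_eq, sub_zero] at hy
    have h1 : (max y 0)^2 ≤ y^2 := max_sq_le y
    rw [show ((max y 0)^2 - (max (0:ℝ) 0)^2 - (y - 0) • (2 * max (0:ℝ) 0)) = (max y 0)^2 by simp,
      Real.norm_of_nonneg (by positivity)]
    have h3 : y ^ 2 = |y| * |y| := by rw [← abs_mul, ← sq, abs_of_nonneg (sq_nonneg y)]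
    calc (max y 0)^2 ≤ y^2 := h1
      _ = |y| * |y| := h3
      _ ≤ c * |y| := mul_le_mul_of_nonneg_right (le_of_lt hy) (abs_nonneg y)
      _ = c * ‖y - 0‖ := by simp [Real.norm_eq_abs]
  · have h0 : (fun y : ℝ => (max y 0)^2) =ᶠ[nhds u] (fun y => y^2) := by
      filter_upwards [Ioi_mem_nhds hu] with y hy
      rw [max_eq_left (le_of_lt hy)]
    simpa [max_eq_left hu.le, mul_comm] using (hasDerivAt_pow 2 u).congr_of_eventuallyEq h0

lemma l2_inner_le (a₁ a₂ b₁ b₂ : ℝ) :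
    a₁*b₁ + a₂*b₂ ≤ Real.sqrt (a₁^2+a₂^2) * Real.sqrt (b₁^2+b₂^2) := by
  have h1 : (a₁*b₁ + a₂*b₂)^2 ≤ (a₁^2+a₂^2) * (b₁^2+b₂^2) := by
    nlinarith [sq_nonneg (a₁*b₂ - a₂*b₁)]
  calc a₁*b₁ + a₂*b₂ ≤ |a₁*b₁ + a₂*b₂| := le_abs_self _
    _ = Real.sqrt ((a₁*b₁ + a₂*b₂)^2) := (Real.sqrt_sq_eq_abs _).symm
    _ ≤ Real.sqrt ((a₁^2+a₂^2) * (b₁^2+b₂^2)) := Real.sqrt_le_sqrt h1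
    _ = _ := Real.sqrt_mul (by positivity) _

lemma weighted_CS {w : ℝ} (hw : 0 ≤ w) (hw1 : w ≤ 1) (a b u v : ℝ) :
    w * a * u + (1 - w) * b * v ≤
      Real.sqrt (w * a^2 + (1-w) * b^2) * Real.sqrt (w * u^2 + (1-w) * v^2) := by
  have h := l2_inner_le (Real.sqrt w * a) (Real.sqrt (1-w) * b) (Real.sqrt w * u) (Real.sqrt (1-w) * v)
  have hw' : Real.sqrt w ^ 2 = w := Real.sq_sqrt hw
  have hw1' : Real.sqrt (1-w) ^ 2 = 1 - w := Real.sq_sqrt (by linarith)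
  calc w * a * u + (1 - w) * b * v
      = (Real.sqrt w * a) * (Real.sqrt w * u) + (Real.sqrt (1-w) * b) * (Real.sqrt (1-w) * v) := by
        rw [show (Real.sqrt w * a) * (Real.sqrt w * u) = Real.sqrt w ^2 * (a * u) by ring,
          show (Real.sqrt (1-w) * b) * (Real.sqrt (1-w) * v) = Real.sqrt (1-w) ^2 * (b * v) by ring,
          hw', hw1']
        ring
    _ ≤ _ := by
        convert h using 3 <;> ring_nf <;> rw [mul_comm] <;> nlinarith [hw', hw1']

lemma affine_sq_bound (A B C : ℝ) (x y : ℝ) :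
    (A + B*x + C*y)^2 ≤ (3*(A^2+B^2+C^2)) * ((1+x^2)*(1+y^2)) := by
  nlinarith [sq_nonneg (A - B*x), sq_nonneg (A - C*y), sq_nonneg (B*x - C*y),
    sq_nonneg (x*y), sq_nonneg A, sq_nonneg B, sq_nonneg C, sq_nonneg x, sq_nonneg y,
    mul_nonneg (sq_nonneg B) (sq_nonneg (x*y)), mul_nonneg (sq_nonneg C) (sq_nonneg (x*y)),
    mul_nonneg (sq_nonneg A) (sq_nonneg (x*y)), mul_nonneg (sq_nonneg A) (sq_nonneg x),
    mul_nonneg (sq_nonneg A) (sq_nonneg y), mul_nonneg (sq_nonneg B) (sq_nonneg y),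
    mul_nonneg (sq_nonneg C) (sq_nonneg x)]

lemma abs_two_max_mul_le (u v : ℝ) : |2 * max u 0 * v| ≤ u^2 + v^2 := by
  have h0 : (0:ℝ) ≤ max u 0 := le_max_right _ _
  have h1 : max u 0 ≤ |u| := max_le (le_abs_self u) (abs_nonneg u)
  rw [abs_mul, abs_mul, abs_two, abs_of_nonneg h0]
  nlinarith [sq_nonneg (|u| - |v|), sq_abs u, sq_abs v, abs_nonneg v, abs_nonneg u]



lemma stdG_pos_Ioo {a b : ℝ} (hab : a < b) : 0 < stdG (Ioo a b) := by
  rw [stdG_eq, withDensity_apply _ measurableSet_Ioo]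
  rw [lintegral_pos_iff_support (measurable_gaussianPDF 0 1)]
  have hs : Function.support (gaussianPDF 0 1) = Set.univ := by
    apply Set.eq_univ_of_forall
    intro x
    exact (gaussianPDF_pos 0 one_ne_zero x).ne'
  rw [hs]
  simp [Real.volume_Ioo, hab]

lemma stdG_map_neg : stdG.map (fun x : ℝ => -x) = stdG := by
  have h := gaussianReal_map_const_mul (μ := 0) (v := 1) (-1)
  have h2 : (fun x : ℝ => -x) = (fun x : ℝ => (-1) * x) := by funext x; ring
  unfold stdG
  rw [h2, h]
  norm_num

lemma integral_comp_neg_stdG (h : ℝ → ℝ) (hm : AEStronglyMeasurable h stdG) :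
    ∫ x, h (-x) ∂stdG = ∫ x, h x ∂stdG := by
  conv_rhs => rw [← stdG_map_neg]
  rw [integral_map (measurable_neg.aemeasurable) (by rwa [stdG_map_neg])]

set_option maxHeartbeats 1000000


def Γm : Measure (ℝ × ℝ) := stdG.prod stdG

instance : IsProbabilityMeasure Γm := by unfold Γm; infer_instance

def phi (f : ℝ → ℝ) (κ c₁ c₂ : ℝ) (p : ℝ × ℝ) : ℝ :=
  f p.1 * (max (κ - c₁ * p.1 - c₂ * p.2) 0) ^ 2
    + (1 - f p.1) * (max (κ + c₁ * p.1 - c₂ * p.2) 0) ^ 2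

variable {f : ℝ → ℝ} {κ c₁ c₂ : ℝ}

lemma integrable_one_add_sq : Integrable (fun x : ℝ => 1 + x ^ 2) stdG :=
  (integrable_const 1).add integrable_sq_stdG

lemma integrable_polybound {h : ℝ × ℝ → ℝ} (hm : AEStronglyMeasurable h Γm) (C : ℝ)
    (hb : ∀ p : ℝ × ℝ, ‖h p‖ ≤ C * ((1 + p.1 ^ 2) * (1 + p.2 ^ 2))) : Integrable h Γm := by
  have hint : Integrable (fun p : ℝ × ℝ => (1 + p.1 ^ 2) * (1 + p.2 ^ 2)) Γm :=
    integrable_one_add_sq.mul_prod integrable_one_add_sq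
  exact ((hint.const_mul C).mono' hm (Filter.Eventually.of_forall hb))

lemma phi_cont (hf : Continuous f) : Continuous (phi f κ c₁ c₂) := by
  unfold phi
  fun_prop

lemma phi_nonneg (hf01 : ∀ x, f x ∈ Set.Icc (0:ℝ) 1) (p : ℝ × ℝ) : 0 ≤ phi f κ c₁ c₂ p := by
  have h1 := (hf01 p.1).1; have h2 := (hf01 p.1).2
  have := sq_nonneg (max (κ - c₁ * p.1 - c₂ * p.2) 0)
  have := sq_nonneg (max (κ + c₁ * p.1 - c₂ * p.2) 0)
  unfold phi
  nlinarith

lemma phi_bound (hf01 : ∀ x, f x ∈ Set.Icc (0:ℝ) 1) (p : ℝ × ℝ) :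
    ‖phi f κ c₁ c₂ p‖ ≤ (6*(κ^2+c₁^2+c₂^2)) * ((1 + p.1 ^ 2) * (1 + p.2 ^ 2)) := by
  have h1 := (hf01 p.1).1; have h2 := (hf01 p.1).2
  rw [Real.norm_of_nonneg (phi_nonneg hf01 p)]
  have b1 : (max (κ - c₁ * p.1 - c₂ * p.2) 0) ^ 2 ≤ (3*(κ^2+c₁^2+c₂^2)) * ((1+p.1^2)*(1+p.2^2)) := by
    refine (max_sq_le _).trans ?_
    have := affine_sq_bound κ (-c₁) (-c₂) p.1 p.2
    calc (κ - c₁ * p.1 - c₂ * p.2)^2 = (κ + (-c₁)*p.1 + (-c₂)*p.2)^2 := by ring_nf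
      _ ≤ (3*(κ^2+(-c₁)^2+(-c₂)^2)) * ((1+p.1^2)*(1+p.2^2)) := this
      _ = (3*(κ^2+c₁^2+c₂^2)) * ((1+p.1^2)*(1+p.2^2)) := by ring_nf
  have b2 : (max (κ + c₁ * p.1 - c₂ * p.2) 0) ^ 2 ≤ (3*(κ^2+c₁^2+c₂^2)) * ((1+p.1^2)*(1+p.2^2)) := by
    refine (max_sq_le _).trans ?_
    have := affine_sq_bound κ c₁ (-c₂) p.1 p.2
    calc (κ + c₁ * p.1 - c₂ * p.2)^2 = (κ + c₁*p.1 + (-c₂)*p.2)^2 := by ring_nf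
      _ ≤ (3*(κ^2+c₁^2+(-c₂)^2)) * ((1+p.1^2)*(1+p.2^2)) := this
      _ = (3*(κ^2+c₁^2+c₂^2)) * ((1+p.1^2)*(1+p.2^2)) := by ring_nf
  have hm1 : (0:ℝ) ≤ (max (κ - c₁ * p.1 - c₂ * p.2) 0) ^ 2 := sq_nonneg _
  have hm2 : (0:ℝ) ≤ (max (κ + c₁ * p.1 - c₂ * p.2) 0) ^ 2 := sq_nonneg _
  unfold phi
  nlinarith

lemma integrable_phi (hf : Continuous f) (hf01 : ∀ x, f x ∈ Set.Icc (0:ℝ) 1) :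
    Integrable (phi f κ c₁ c₂) Γm :=
  integrable_polybound (phi_cont hf).aestronglyMeasurable _ (phi_bound hf01)


lemma Fk_eq (hf : Continuous f) (hf01 : ∀ x, f x ∈ Set.Icc (0:ℝ) 1) :
    Fk f κ c₁ c₂ = Real.sqrt (∫ p, phi f κ c₁ c₂ p ∂Γm) := by
  unfold Fk
  congr 1
  exact integral_integral (integrable_phi hf hf01)

set_option maxHeartbeats 1000000


-- dup instance removed


variable {f : ℝ → ℝ} {κ c₁ c₂ : ℝ}


lemma int_phi_pos (hf : Continuous f) (hf01 : ∀ x, f x ∈ Set.Icc (0:ℝ) 1) (hκ : 0 < κ) :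
    0 < ∫ p, phi f κ c₁ c₂ p ∂Γm := by
  set δ := κ / (2 * (1 + |c₁| + |c₂|)) with hδ
  have hδpos : 0 < δ := by
    apply div_pos hκ
    positivity
  set S : Set ℝ := Ioo (-δ) δ with hS
  have hlow : ∀ p ∈ S ×ˢ S, (κ/2)^2 ≤ phi f κ c₁ c₂ p := by
    rintro ⟨x, y⟩ ⟨hx, hy⟩
    simp only [hS, mem_Ioo] at hx hy
    have hxd : |x| < δ := abs_lt.mpr ⟨hx.1, hx.2⟩
    have hyd : |y| < δ := abs_lt.mpr ⟨hy.1, hy.2⟩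
    have hsum : |c₁ * x| + |c₂ * y| ≤ κ/2 := by
      rw [abs_mul, abs_mul]
      have h1 : |c₁| * |x| ≤ |c₁| * δ := mul_le_mul_of_nonneg_left hxd.le (abs_nonneg _)
      have h2 : |c₂| * |y| ≤ |c₂| * δ := mul_le_mul_of_nonneg_left hyd.le (abs_nonneg _)
      have h3 : (|c₁| + |c₂|) * δ ≤ (1 + |c₁| + |c₂|) * δ := by nlinarith [hδpos]
      have h4 : (1 + |c₁| + |c₂|) * δ = κ/2 := by
        rw [hδ]; field_simp
      linarith
    have harg1 : κ/2 ≤ κ - c₁ * x - c₂ * y := by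
      have := abs_le.mp (le_refl |c₁ * x|)
      have h5 : c₁ * x + c₂ * y ≤ κ/2 :=
        le_trans (by linarith [le_abs_self (c₁*x), le_abs_self (c₂*y)]) hsum
      linarith
    have harg2 : κ/2 ≤ κ + c₁ * x - c₂ * y := by
      have h5 : -(c₁ * x) + c₂ * y ≤ κ/2 := by
        have := neg_abs_le (c₁*x); have := le_abs_self (c₂*y); linarith
      linarith
    have hm1 : (κ/2)^2 ≤ (max (κ - c₁ * x - c₂ * y) 0)^2 := by
      apply pow_le_pow_left₀ (by positivity)
      exact le_max_of_le_left harg1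
    have hm2 : (κ/2)^2 ≤ (max (κ + c₁ * x - c₂ * y) 0)^2 := by
      apply pow_le_pow_left₀ (by positivity)
      exact le_max_of_le_left harg2
    have h1 := (hf01 x).1; have h2 := (hf01 x).2
    unfold phi
    simp only
    nlinarith
  have hmeas : MeasurableSet (S ×ˢ S) := measurableSet_Ioo.prod measurableSet_Ioo
  have hμpos : 0 < (Γm (S ×ˢ S)).toReal := by
    apply ENNReal.toReal_pos _ (measure_ne_top _ _)
    unfold Γm
    rw [Measure.prod_prod]
    exact (ENNReal.mul_pos (stdG_pos_Ioo (by linarith)).ne' (stdG_pos_Ioo (by linarith)).ne').ne'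
  calc (0:ℝ) < (κ/2)^2 * (Γm (S ×ˢ S)).toReal := by positivity
    _ ≤ ∫ p in S ×ˢ S, phi f κ c₁ c₂ p ∂Γm :=
        setIntegral_ge_of_const_le_real hmeas (measure_ne_top _ _) hlow
          ((integrable_phi hf hf01).integrableOn)
    _ ≤ ∫ p, phi f κ c₁ c₂ p ∂Γm :=
        setIntegral_le_integral (integrable_phi hf hf01)
          (Filter.Eventually.of_forall (phi_nonneg hf01))

set_option maxHeartbeats 1000000


-- dup instance removed


variable {f : ℝ → ℝ} {κ c₁ c₂ : ℝ}


def dphi1 (f : ℝ → ℝ) (κ c₁ c₂ : ℝ) (p : ℝ × ℝ) : ℝ :=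
  f p.1 * (2 * max (κ - c₁ * p.1 - c₂ * p.2) 0 * (-p.1))
    + (1 - f p.1) * (2 * max (κ + c₁ * p.1 - c₂ * p.2) 0 * p.1)

def dphi2 (f : ℝ → ℝ) (κ c₁ c₂ : ℝ) (p : ℝ × ℝ) : ℝ :=
  f p.1 * (2 * max (κ - c₁ * p.1 - c₂ * p.2) 0 * (-p.2))
    + (1 - f p.1) * (2 * max (κ + c₁ * p.1 - c₂ * p.2) 0 * (-p.2))

lemma hasDerivAt_phi1 (p : ℝ × ℝ) (t : ℝ) :
    HasDerivAt (fun t => phi f κ t c₂ p) (dphi1 f κ t c₂ p) t := by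
  have h1 : HasDerivAt (fun y : ℝ => κ - y * p.1 - c₂ * p.2) (-p.1) t := by
    simpa using (((hasDerivAt_id t).mul_const p.1).const_sub κ).sub_const (c₂ * p.2)
  have h2 : HasDerivAt (fun y : ℝ => κ + y * p.1 - c₂ * p.2) (p.1) t := by
    simpa using (((hasDerivAt_id t).mul_const p.1).const_add κ).sub_const (c₂ * p.2)
  have g1 := ((hasDerivAt_max_sq (κ - t * p.1 - c₂ * p.2)).comp t h1).const_mul (f p.1)
  have g2 := ((hasDerivAt_max_sq (κ + t * p.1 - c₂ * p.2)).comp t h2).const_mul (1 - f p.1)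
  have := g1.add g2
  exact this.congr_deriv rfl

lemma hasDerivAt_phi2 (p : ℝ × ℝ) (t : ℝ) :
    HasDerivAt (fun t => phi f κ c₁ t p) (dphi2 f κ c₁ t p) t := by
  have h1 : HasDerivAt (fun y : ℝ => κ - c₁ * p.1 - y * p.2) (-p.2) t := by
    simpa using (((hasDerivAt_id t).mul_const p.2).const_sub (κ - c₁ * p.1))
  have h2 : HasDerivAt (fun y : ℝ => κ + c₁ * p.1 - y * p.2) (-p.2) t := by
    simpa using (((hasDerivAt_id t).mul_const p.2).const_sub (κ + c₁ * p.1))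
  have g1 := ((hasDerivAt_max_sq (κ - c₁ * p.1 - t * p.2)).comp t h1).const_mul (f p.1)
  have g2 := ((hasDerivAt_max_sq (κ + c₁ * p.1 - t * p.2)).comp t h2).const_mul (1 - f p.1)
  have := g1.add g2
  exact this.congr_deriv rfl

lemma dphi1_bound (hf01 : ∀ x, f x ∈ Set.Icc (0:ℝ) 1) {t : ℝ} (ht : |t| ≤ |c₁| + 1) (p : ℝ × ℝ) :
    ‖dphi1 f κ t c₂ p‖ ≤ (6*(κ^2+(|c₁|+1)^2+c₂^2) + 2) * ((1 + p.1 ^ 2) * (1 + p.2 ^ 2)) := by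
  have h1 := (hf01 p.1).1; have h2 := (hf01 p.1).2
  have b1 : |2 * max (κ - t * p.1 - c₂ * p.2) 0 * (-p.1)| ≤ (κ - t * p.1 - c₂ * p.2)^2 + p.1^2 := by
    have := abs_two_max_mul_le (κ - t * p.1 - c₂ * p.2) (-p.1)
    simpa [neg_sq] using this
  have b2 : |2 * max (κ + t * p.1 - c₂ * p.2) 0 * p.1| ≤ (κ + t * p.1 - c₂ * p.2)^2 + p.1^2 :=
    abs_two_max_mul_le _ _
  have c1 : (κ - t * p.1 - c₂ * p.2)^2 ≤ (3*(κ^2+(|c₁|+1)^2+c₂^2)) * ((1+p.1^2)*(1+p.2^2)) := by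
    have h := affine_sq_bound κ (-t) (-c₂) p.1 p.2
    have ht2 : t^2 ≤ (|c₁|+1)^2 := by nlinarith [sq_abs t, abs_nonneg t, abs_nonneg c₁]
    have hprod : (0:ℝ) ≤ (1+p.1^2)*(1+p.2^2) := by positivity
    calc (κ - t * p.1 - c₂ * p.2)^2 = (κ + (-t)*p.1 + (-c₂)*p.2)^2 := by ring_nf
      _ ≤ (3*(κ^2+(-t)^2+(-c₂)^2)) * ((1+p.1^2)*(1+p.2^2)) := h
      _ ≤ (3*(κ^2+(|c₁|+1)^2+c₂^2)) * ((1+p.1^2)*(1+p.2^2)) := by nlinarith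
  have c2 : (κ + t * p.1 - c₂ * p.2)^2 ≤ (3*(κ^2+(|c₁|+1)^2+c₂^2)) * ((1+p.1^2)*(1+p.2^2)) := by
    have h := affine_sq_bound κ t (-c₂) p.1 p.2
    have ht2 : t^2 ≤ (|c₁|+1)^2 := by nlinarith [sq_abs t, abs_nonneg t, abs_nonneg c₁]
    have hprod : (0:ℝ) ≤ (1+p.1^2)*(1+p.2^2) := by positivity
    calc (κ + t * p.1 - c₂ * p.2)^2 = (κ + t*p.1 + (-c₂)*p.2)^2 := by ring_nf
      _ ≤ (3*(κ^2+t^2+(-c₂)^2)) * ((1+p.1^2)*(1+p.2^2)) := h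
      _ ≤ (3*(κ^2+(|c₁|+1)^2+c₂^2)) * ((1+p.1^2)*(1+p.2^2)) := by nlinarith
  have cp : p.1^2 ≤ (1+p.1^2)*(1+p.2^2) := by nlinarith [sq_nonneg p.1, sq_nonneg p.2, sq_nonneg (p.1*p.2)]
  unfold dphi1
  have e1 : |f p.1 * (2 * max (κ - t * p.1 - c₂ * p.2) 0 * (-p.1))|
      ≤ |2 * max (κ - t * p.1 - c₂ * p.2) 0 * (-p.1)| := by
    rw [abs_mul]
    have : |f p.1| ≤ 1 := by rw [abs_of_nonneg h1]; exact h2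
    nlinarith [abs_nonneg (2 * max (κ - t * p.1 - c₂ * p.2) 0 * (-p.1))]
  have e2 : |(1 - f p.1) * (2 * max (κ + t * p.1 - c₂ * p.2) 0 * p.1)|
      ≤ |2 * max (κ + t * p.1 - c₂ * p.2) 0 * p.1| := by
    rw [abs_mul]
    have : |1 - f p.1| ≤ 1 := by rw [abs_of_nonneg (by linarith)]; linarith
    nlinarith [abs_nonneg (2 * max (κ + t * p.1 - c₂ * p.2) 0 * p.1)]
  calc ‖f p.1 * (2 * max (κ - t * p.1 - c₂ * p.2) 0 * (-p.1))
      + (1 - f p.1) * (2 * max (κ + t * p.1 - c₂ * p.2) 0 * p.1)‖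
      ≤ |f p.1 * (2 * max (κ - t * p.1 - c₂ * p.2) 0 * (-p.1))|
        + |(1 - f p.1) * (2 * max (κ + t * p.1 - c₂ * p.2) 0 * p.1)| := by
        rw [Real.norm_eq_abs]; exact abs_add_le _ _
    _ ≤ |2 * max (κ - t * p.1 - c₂ * p.2) 0 * (-p.1)|
        + |2 * max (κ + t * p.1 - c₂ * p.2) 0 * p.1| := add_le_add e1 e2
    _ ≤ (6*(κ^2+(|c₁|+1)^2+c₂^2) + 2) * ((1 + p.1 ^ 2) * (1 + p.2 ^ 2)) := by
        nlinarith [b1, b2, c1, c2, cp]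

lemma dphi2_bound (hf01 : ∀ x, f x ∈ Set.Icc (0:ℝ) 1) {t : ℝ} (ht : |t| ≤ |c₂| + 1) (p : ℝ × ℝ) :
    ‖dphi2 f κ c₁ t p‖ ≤ (6*(κ^2+c₁^2+(|c₂|+1)^2) + 2) * ((1 + p.1 ^ 2) * (1 + p.2 ^ 2)) := by
  have h1 := (hf01 p.1).1; have h2 := (hf01 p.1).2
  have b1 : |2 * max (κ - c₁ * p.1 - t * p.2) 0 * (-p.2)| ≤ (κ - c₁ * p.1 - t * p.2)^2 + p.2^2 := by
    have := abs_two_max_mul_le (κ - c₁ * p.1 - t * p.2) (-p.2)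
    simpa [neg_sq] using this
  have b2 : |2 * max (κ + c₁ * p.1 - t * p.2) 0 * (-p.2)| ≤ (κ + c₁ * p.1 - t * p.2)^2 + p.2^2 := by
    have := abs_two_max_mul_le (κ + c₁ * p.1 - t * p.2) (-p.2)
    simpa [neg_sq] using this
  have ht2 : t^2 ≤ (|c₂|+1)^2 := by nlinarith [sq_abs t, abs_nonneg t, abs_nonneg c₂]
  have hprod : (0:ℝ) ≤ (1+p.1^2)*(1+p.2^2) := by positivity
  have c1 : (κ - c₁ * p.1 - t * p.2)^2 ≤ (3*(κ^2+c₁^2+(|c₂|+1)^2)) * ((1+p.1^2)*(1+p.2^2)) := by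
    have h := affine_sq_bound κ (-c₁) (-t) p.1 p.2
    calc (κ - c₁ * p.1 - t * p.2)^2 = (κ + (-c₁)*p.1 + (-t)*p.2)^2 := by ring_nf
      _ ≤ (3*(κ^2+(-c₁)^2+(-t)^2)) * ((1+p.1^2)*(1+p.2^2)) := h
      _ ≤ _ := by nlinarith
  have c2 : (κ + c₁ * p.1 - t * p.2)^2 ≤ (3*(κ^2+c₁^2+(|c₂|+1)^2)) * ((1+p.1^2)*(1+p.2^2)) := by
    have h := affine_sq_bound κ c₁ (-t) p.1 p.2
    calc (κ + c₁ * p.1 - t * p.2)^2 = (κ + c₁*p.1 + (-t)*p.2)^2 := by ring_nf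
      _ ≤ (3*(κ^2+c₁^2+(-t)^2)) * ((1+p.1^2)*(1+p.2^2)) := h
      _ ≤ _ := by nlinarith
  have cp : p.2^2 ≤ (1+p.1^2)*(1+p.2^2) := by nlinarith [sq_nonneg p.1, sq_nonneg p.2, sq_nonneg (p.1*p.2)]
  unfold dphi2
  have e1 : |f p.1 * (2 * max (κ - c₁ * p.1 - t * p.2) 0 * (-p.2))|
      ≤ |2 * max (κ - c₁ * p.1 - t * p.2) 0 * (-p.2)| := by
    rw [abs_mul]
    have : |f p.1| ≤ 1 := by rw [abs_of_nonneg h1]; exact h2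
    nlinarith [abs_nonneg (2 * max (κ - c₁ * p.1 - t * p.2) 0 * (-p.2))]
  have e2 : |(1 - f p.1) * (2 * max (κ + c₁ * p.1 - t * p.2) 0 * (-p.2))|
      ≤ |2 * max (κ + c₁ * p.1 - t * p.2) 0 * (-p.2)| := by
    rw [abs_mul]
    have : |1 - f p.1| ≤ 1 := by rw [abs_of_nonneg (by linarith)]; linarith
    nlinarith [abs_nonneg (2 * max (κ + c₁ * p.1 - t * p.2) 0 * (-p.2))]
  calc ‖f p.1 * (2 * max (κ - c₁ * p.1 - t * p.2) 0 * (-p.2))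
      + (1 - f p.1) * (2 * max (κ + c₁ * p.1 - t * p.2) 0 * (-p.2))‖
      ≤ |f p.1 * (2 * max (κ - c₁ * p.1 - t * p.2) 0 * (-p.2))|
        + |(1 - f p.1) * (2 * max (κ + c₁ * p.1 - t * p.2) 0 * (-p.2))| := by
        rw [Real.norm_eq_abs]; exact abs_add_le _ _
    _ ≤ |2 * max (κ - c₁ * p.1 - t * p.2) 0 * (-p.2)|
        + |2 * max (κ + c₁ * p.1 - t * p.2) 0 * (-p.2)| := add_le_add e1 e2
    _ ≤ _ := by nlinarith [b1, b2, c1, c2, cp]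

lemma dphi1_cont (hf : Continuous f) : Continuous (dphi1 f κ c₁ c₂) := by
  unfold dphi1
  fun_prop

lemma dphi2_cont (hf : Continuous f) : Continuous (dphi2 f κ c₁ c₂) := by
  unfold dphi2
  fun_prop

lemma hasDerivAt_int_phi1 (hf : Continuous f) (hf01 : ∀ x, f x ∈ Set.Icc (0:ℝ) 1) :
    Integrable (dphi1 f κ c₁ c₂) Γm ∧
      HasDerivAt (fun t => ∫ p, phi f κ t c₂ p ∂Γm) (∫ p, dphi1 f κ c₁ c₂ p ∂Γm) c₁ := by
  apply hasDerivAt_integral_of_dominated_loc_of_deriv_le (F := fun t p => phi f κ t c₂ p)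
    (F' := fun t p => dphi1 f κ t c₂ p)
    (bound := fun p => (6*(κ^2+(|c₁|+1)^2+c₂^2) + 2) * ((1 + p.1 ^ 2) * (1 + p.2 ^ 2)))
    (s := Metric.ball c₁ 1) (Metric.ball_mem_nhds c₁ one_pos)
  · exact Filter.Eventually.of_forall (fun t => (phi_cont hf).aestronglyMeasurable)
  · exact integrable_phi hf hf01
  · exact (dphi1_cont hf).aestronglyMeasurable
  · refine Filter.Eventually.of_forall (fun p => fun t ht => ?_)
    have : |t| ≤ |c₁| + 1 := by
      rw [Metric.mem_ball, Real.dist_eq] at ht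
      have := abs_sub_abs_le_abs_sub t c₁
      linarith
    exact dphi1_bound hf01 this p
  · exact integrable_polybound
      ((continuous_const.mul (((continuous_const.add (continuous_fst.pow 2))).mul
        ((continuous_const.add (continuous_snd.pow 2)))))).aestronglyMeasurable _
      (fun p => by
        rw [Real.norm_of_nonneg (by positivity)])
  · exact Filter.Eventually.of_forall (fun p => fun t ht => hasDerivAt_phi1 p t)

lemma hasDerivAt_int_phi2 (hf : Continuous f) (hf01 : ∀ x, f x ∈ Set.Icc (0:ℝ) 1) :
    Integrable (dphi2 f κ c₁ c₂) Γm ∧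
      HasDerivAt (fun t => ∫ p, phi f κ c₁ t p ∂Γm) (∫ p, dphi2 f κ c₁ c₂ p ∂Γm) c₂ := by
  apply hasDerivAt_integral_of_dominated_loc_of_deriv_le (F := fun t p => phi f κ c₁ t p)
    (F' := fun t p => dphi2 f κ c₁ t p)
    (bound := fun p => (6*(κ^2+c₁^2+(|c₂|+1)^2) + 2) * ((1 + p.1 ^ 2) * (1 + p.2 ^ 2)))
    (s := Metric.ball c₂ 1) (Metric.ball_mem_nhds c₂ one_pos)
  · exact Filter.Eventually.of_forall (fun t => (phi_cont hf).aestronglyMeasurable)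
  · exact integrable_phi hf hf01
  · exact (dphi2_cont hf).aestronglyMeasurable
  · refine Filter.Eventually.of_forall (fun p => fun t ht => ?_)
    have : |t| ≤ |c₂| + 1 := by
      rw [Metric.mem_ball, Real.dist_eq] at ht
      have := abs_sub_abs_le_abs_sub t c₂
      linarith
    exact dphi2_bound hf01 this p
  · exact integrable_polybound
      ((continuous_const.mul (((continuous_const.add (continuous_fst.pow 2))).mul
        ((continuous_const.add (continuous_snd.pow 2)))))).aestronglyMeasurable _
      (fun p => by
        rw [Real.norm_of_nonneg (by positivity)])
  · exact Filter.Eventually.of_forall (fun p => fun t ht => hasDerivAt_phi2 p t)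

set_option maxHeartbeats 1000000

-- dup instance removed

lemma CS_integral {u v : ℝ × ℝ → ℝ} (hu : Integrable u Γm) (hv : Integrable v Γm)
    (hum : AEStronglyMeasurable (fun p => Real.sqrt (u p)) Γm)
    (hvm : AEStronglyMeasurable (fun p => Real.sqrt (v p)) Γm)
    (hu0 : ∀ p, 0 ≤ u p) (hv0 : ∀ p, 0 ≤ v p) :
    ∫ p, Real.sqrt (u p) * Real.sqrt (v p) ∂Γm
      ≤ Real.sqrt (∫ p, u p ∂Γm) * Real.sqrt (∫ p, v p ∂Γm) := by
  have hpq : Real.HolderConjugate 2 2 := Real.HolderConjugate.two_two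
  have hmu : MemLp (fun p => Real.sqrt (u p)) (ENNReal.ofReal 2) Γm := by
    rw [ENNReal.ofReal_ofNat]
    refine (memLp_two_iff_integrable_sq hum).2 ?_
    refine hu.congr ?_
    refine Filter.Eventually.of_forall (fun p => ?_)
    exact (Real.sq_sqrt (hu0 p)).symm
  have hmv : MemLp (fun p => Real.sqrt (v p)) (ENNReal.ofReal 2) Γm := by
    rw [ENNReal.ofReal_ofNat]
    refine (memLp_two_iff_integrable_sq hvm).2 ?_
    refine hv.congr ?_
    refine Filter.Eventually.of_forall (fun p => ?_)
    exact (Real.sq_sqrt (hv0 p)).symm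
  have h := integral_mul_le_Lp_mul_Lq_of_nonneg hpq
    (Filter.Eventually.of_forall (fun p => Real.sqrt_nonneg (u p)))
    (Filter.Eventually.of_forall (fun p => Real.sqrt_nonneg (v p))) hmu hmv
  have e1 : ∫ p, Real.sqrt (u p) ^ (2:ℝ) ∂Γm = ∫ p, u p ∂Γm := by
    apply integral_congr_ae
    refine Filter.Eventually.of_forall (fun p => ?_)
    show Real.sqrt (u p) ^ (2:ℝ) = u p
    rw [Real.rpow_two, Real.sq_sqrt (hu0 p)]
  have e2 : ∫ p, Real.sqrt (v p) ^ (2:ℝ) ∂Γm = ∫ p, v p ∂Γm := by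
    apply integral_congr_ae
    refine Filter.Eventually.of_forall (fun p => ?_)
    show Real.sqrt (v p) ^ (2:ℝ) = v p
    rw [Real.rpow_two, Real.sq_sqrt (hv0 p)]
  rw [e1, e2] at h
  calc ∫ p, Real.sqrt (u p) * Real.sqrt (v p) ∂Γm
      ≤ (∫ p, u p ∂Γm) ^ ((1:ℝ)/2) * (∫ p, v p ∂Γm) ^ ((1:ℝ)/2) := h
    _ = _ := by rw [← Real.sqrt_eq_rpow, ← Real.sqrt_eq_rpow]

set_option maxHeartbeats 1000000


-- dup instance removed






variable {f : ℝ → ℝ} {κ c₁ c₂ : ℝ}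


lemma d1F_formula (hf : Continuous f) (hf01 : ∀ x, f x ∈ Set.Icc (0:ℝ) 1) (hκ : 0 < κ) :
    d1F f κ c₁ c₂ = (∫ p, dphi1 f κ c₁ c₂ p ∂Γm)
      / (2 * Real.sqrt (∫ p, phi f κ c₁ c₂ p ∂Γm)) := by
  have hJ := int_phi_pos hf hf01 hκ (c₁ := c₁) (c₂ := c₂)
  have hs := Real.hasDerivAt_sqrt hJ.ne'
  have hcomp := hs.comp c₁ (hasDerivAt_int_phi1 hf hf01).2
  have heq : (fun t => Fk f κ t c₂)
      = (Real.sqrt ∘ fun t => ∫ p, phi f κ t c₂ p ∂Γm) := by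
    funext t; exact Fk_eq hf hf01
  unfold d1F
  rw [heq, hcomp.deriv]
  field_simp

lemma d2F_formula (hf : Continuous f) (hf01 : ∀ x, f x ∈ Set.Icc (0:ℝ) 1) (hκ : 0 < κ) :
    d2F f κ c₁ c₂ = (∫ p, dphi2 f κ c₁ c₂ p ∂Γm)
      / (2 * Real.sqrt (∫ p, phi f κ c₁ c₂ p ∂Γm)) := by
  have hJ := int_phi_pos hf hf01 hκ (c₁ := c₁) (c₂ := c₂)
  have hs := Real.hasDerivAt_sqrt hJ.ne'
  have hcomp := hs.comp c₂ (hasDerivAt_int_phi2 hf hf01).2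
  have heq : (fun t => Fk f κ c₁ t)
      = (Real.sqrt ∘ fun t => ∫ p, phi f κ c₁ t p ∂Γm) := by
    funext t; exact Fk_eq hf hf01
  unfold d2F
  rw [heq, hcomp.deriv]
  field_simp

/-- `v·T` -/
def vT (f : ℝ → ℝ) (κ c₁ c₂ : ℝ) (p : ℝ × ℝ) : ℝ :=
  f p.1 * max (κ - c₁ * p.1 - c₂ * p.2) 0 * p.1
    - (1 - f p.1) * max (κ + c₁ * p.1 - c₂ * p.2) 0 * p.1

/-- `v·Z` -/
def vZ (f : ℝ → ℝ) (κ c₁ c₂ : ℝ) (p : ℝ × ℝ) : ℝ :=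
  f p.1 * max (κ - c₁ * p.1 - c₂ * p.2) 0 * p.2
    + (1 - f p.1) * max (κ + c₁ * p.1 - c₂ * p.2) 0 * p.2

lemma abs_wmax_mul_le {w : ℝ} (hw0 : 0 ≤ w) (hw1 : w ≤ 1) (u v : ℝ) :
    |w * max u 0 * v| ≤ (u^2 + v^2) / 2 := by
  have h := abs_two_max_mul_le u v
  have h2 : |w * max u 0 * v| = |w| * |2 * max u 0 * v| / 2 := by
    rw [abs_mul, abs_mul, abs_mul, abs_mul]
    ring_nf
  rw [h2, abs_of_nonneg hw0]
  have := abs_nonneg (2 * max u 0 * v)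
  nlinarith

lemma vT_bound (hf01 : ∀ x, f x ∈ Set.Icc (0:ℝ) 1) (p : ℝ × ℝ) :
    ‖vT f κ c₁ c₂ p‖ ≤ (3*(κ^2+c₁^2+c₂^2) + 1) * ((1 + p.1 ^ 2) * (1 + p.2 ^ 2)) := by
  have h1 := (hf01 p.1).1; have h2 := (hf01 p.1).2
  have b1 := abs_wmax_mul_le h1 h2 (κ - c₁ * p.1 - c₂ * p.2) p.1
  have b2 := abs_wmax_mul_le (by linarith : (0:ℝ) ≤ 1 - f p.1) (by linarith) (κ + c₁ * p.1 - c₂ * p.2) p.1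
  have c1 : (κ - c₁ * p.1 - c₂ * p.2)^2 ≤ (3*(κ^2+c₁^2+c₂^2)) * ((1+p.1^2)*(1+p.2^2)) := by
    have h := affine_sq_bound κ (-c₁) (-c₂) p.1 p.2
    calc (κ - c₁ * p.1 - c₂ * p.2)^2 = (κ + (-c₁)*p.1 + (-c₂)*p.2)^2 := by ring_nf
      _ ≤ (3*(κ^2+(-c₁)^2+(-c₂)^2)) * ((1+p.1^2)*(1+p.2^2)) := h
      _ = _ := by ring_nf
  have c2 : (κ + c₁ * p.1 - c₂ * p.2)^2 ≤ (3*(κ^2+c₁^2+c₂^2)) * ((1+p.1^2)*(1+p.2^2)) := by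
    have h := affine_sq_bound κ c₁ (-c₂) p.1 p.2
    calc (κ + c₁ * p.1 - c₂ * p.2)^2 = (κ + c₁*p.1 + (-c₂)*p.2)^2 := by ring_nf
      _ ≤ (3*(κ^2+c₁^2+(-c₂)^2)) * ((1+p.1^2)*(1+p.2^2)) := h
      _ = _ := by ring_nf
  have cp : p.1^2 ≤ (1+p.1^2)*(1+p.2^2) := by nlinarith [sq_nonneg p.1, sq_nonneg p.2, sq_nonneg (p.1*p.2)]
  have htri : ‖vT f κ c₁ c₂ p‖ ≤ |f p.1 * max (κ - c₁ * p.1 - c₂ * p.2) 0 * p.1|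
      + |(1 - f p.1) * max (κ + c₁ * p.1 - c₂ * p.2) 0 * p.1| := by
    rw [Real.norm_eq_abs]; exact abs_sub _ _
  calc ‖vT f κ c₁ c₂ p‖ ≤ _ := htri
    _ ≤ ((κ - c₁ * p.1 - c₂ * p.2)^2 + p.1^2) / 2 + ((κ + c₁ * p.1 - c₂ * p.2)^2 + p.1^2) / 2 :=
        add_le_add b1 b2
    _ ≤ _ := by nlinarith [c1, c2, cp]

lemma vZ_bound (hf01 : ∀ x, f x ∈ Set.Icc (0:ℝ) 1) (p : ℝ × ℝ) :
    ‖vZ f κ c₁ c₂ p‖ ≤ (3*(κ^2+c₁^2+c₂^2) + 1) * ((1 + p.1 ^ 2) * (1 + p.2 ^ 2)) := by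
  have h1 := (hf01 p.1).1; have h2 := (hf01 p.1).2
  have b1 := abs_wmax_mul_le h1 h2 (κ - c₁ * p.1 - c₂ * p.2) p.2
  have b2 := abs_wmax_mul_le (by linarith : (0:ℝ) ≤ 1 - f p.1) (by linarith) (κ + c₁ * p.1 - c₂ * p.2) p.2
  have c1 : (κ - c₁ * p.1 - c₂ * p.2)^2 ≤ (3*(κ^2+c₁^2+c₂^2)) * ((1+p.1^2)*(1+p.2^2)) := by
    have h := affine_sq_bound κ (-c₁) (-c₂) p.1 p.2
    calc (κ - c₁ * p.1 - c₂ * p.2)^2 = (κ + (-c₁)*p.1 + (-c₂)*p.2)^2 := by ring_nf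
      _ ≤ (3*(κ^2+(-c₁)^2+(-c₂)^2)) * ((1+p.1^2)*(1+p.2^2)) := h
      _ = _ := by ring_nf
  have c2 : (κ + c₁ * p.1 - c₂ * p.2)^2 ≤ (3*(κ^2+c₁^2+c₂^2)) * ((1+p.1^2)*(1+p.2^2)) := by
    have h := affine_sq_bound κ c₁ (-c₂) p.1 p.2
    calc (κ + c₁ * p.1 - c₂ * p.2)^2 = (κ + c₁*p.1 + (-c₂)*p.2)^2 := by ring_nf
      _ ≤ (3*(κ^2+c₁^2+(-c₂)^2)) * ((1+p.1^2)*(1+p.2^2)) := h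
      _ = _ := by ring_nf
  have cp : p.2^2 ≤ (1+p.1^2)*(1+p.2^2) := by nlinarith [sq_nonneg p.1, sq_nonneg p.2, sq_nonneg (p.1*p.2)]
  have htri : ‖vZ f κ c₁ c₂ p‖ ≤ |f p.1 * max (κ - c₁ * p.1 - c₂ * p.2) 0 * p.2|
      + |(1 - f p.1) * max (κ + c₁ * p.1 - c₂ * p.2) 0 * p.2| := by
    rw [Real.norm_eq_abs]; exact abs_add_le _ _
  calc ‖vZ f κ c₁ c₂ p‖ ≤ _ := htri
    _ ≤ ((κ - c₁ * p.1 - c₂ * p.2)^2 + p.2^2) / 2 + ((κ + c₁ * p.1 - c₂ * p.2)^2 + p.2^2) / 2 :=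
        add_le_add b1 b2
    _ ≤ _ := by nlinarith [c1, c2, cp]

lemma vT_cont (hf : Continuous f) : Continuous (vT f κ c₁ c₂) := by unfold vT; fun_prop
lemma vZ_cont (hf : Continuous f) : Continuous (vZ f κ c₁ c₂) := by unfold vZ; fun_prop

lemma integrable_vT (hf : Continuous f) (hf01 : ∀ x, f x ∈ Set.Icc (0:ℝ) 1) :
    Integrable (vT f κ c₁ c₂) Γm :=
  integrable_polybound (vT_cont hf).aestronglyMeasurable _ (vT_bound hf01)

lemma integrable_vZ (hf : Continuous f) (hf01 : ∀ x, f x ∈ Set.Icc (0:ℝ) 1) :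
    Integrable (vZ f κ c₁ c₂) Γm :=
  integrable_polybound (vZ_cont hf).aestronglyMeasurable _ (vZ_bound hf01)

lemma int_vT_zero (hf : Continuous f) (hf01 : ∀ x, f x ∈ Set.Icc (0:ℝ) 1) (hκ : 0 < κ)
    (hd1 : d1F f κ c₁ c₂ = 0) : ∫ p, vT f κ c₁ c₂ p ∂Γm = 0 := by
  have hJ := int_phi_pos hf hf01 hκ (c₁ := c₁) (c₂ := c₂)
  have h := d1F_formula hf hf01 hκ (c₁ := c₁) (c₂ := c₂)
  rw [hd1] at h
  have hs : (0:ℝ) < Real.sqrt (∫ p, phi f κ c₁ c₂ p ∂Γm) := Real.sqrt_pos.mpr hJ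
  have hD : ∫ p, dphi1 f κ c₁ c₂ p ∂Γm = 0 := by
    field_simp at h
    simpa using h.symm
  have hrepr : dphi1 f κ c₁ c₂ = fun p => (-2) * vT f κ c₁ c₂ p := by
    funext p; unfold dphi1 vT; ring
  rw [hrepr, MeasureTheory.integral_const_mul] at hD
  linarith

lemma int_vZ_eq (hf : Continuous f) (hf01 : ∀ x, f x ∈ Set.Icc (0:ℝ) 1) (hκ : 0 < κ) :
    ∫ p, vZ f κ c₁ c₂ p ∂Γm
      = -(d2F f κ c₁ c₂) * Real.sqrt (∫ p, phi f κ c₁ c₂ p ∂Γm) := by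
  have hJ := int_phi_pos hf hf01 hκ (c₁ := c₁) (c₂ := c₂)
  have hs : (0:ℝ) < Real.sqrt (∫ p, phi f κ c₁ c₂ p ∂Γm) := Real.sqrt_pos.mpr hJ
  have h := d2F_formula hf hf01 hκ (c₁ := c₁) (c₂ := c₂)
  have hrepr : dphi2 f κ c₁ c₂ = fun p => (-2) * vZ f κ c₁ c₂ p := by
    funext p; unfold dphi2 vZ; ring
  rw [hrepr, MeasureTheory.integral_const_mul] at h
  rw [h]
  field_simp

set_option maxHeartbeats 1000000


-- dup instance removed






variable {f : ℝ → ℝ} {κ c₁ c₂ : ℝ}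


lemma sqrt_mul_sqrt_le (a b : ℝ) (ha : 0 ≤ a) (hb : 0 ≤ b) :
    Real.sqrt a * Real.sqrt b ≤ (a + b) / 2 := by
  nlinarith [sq_nonneg (Real.sqrt a - Real.sqrt b), Real.sq_sqrt ha, Real.sq_sqrt hb,
    Real.sqrt_nonneg a, Real.sqrt_nonneg b]

lemma integrable_sqrtmul (hf : Continuous f) (hf01 : ∀ x, f x ∈ Set.Icc (0:ℝ) 1)
    {u v : ℝ × ℝ → ℝ} (hu : Integrable u Γm) (hv : Integrable v Γm)
    (huc : Continuous u) (hvc : Continuous v)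
    (hu0 : ∀ p, 0 ≤ u p) (hv0 : ∀ p, 0 ≤ v p) :
    Integrable (fun p => Real.sqrt (u p) * Real.sqrt (v p)) Γm := by
  refine ((hu.add hv).const_mul ((1:ℝ)/2)).mono'
    ((Real.continuous_sqrt.comp huc).mul (Real.continuous_sqrt.comp hvc)).aestronglyMeasurable
    (Filter.Eventually.of_forall (fun p => ?_))
  rw [Real.norm_of_nonneg (mul_nonneg (Real.sqrt_nonneg _) (Real.sqrt_nonneg _))]
  calc Real.sqrt (u p) * Real.sqrt (v p) ≤ (u p + v p) / 2 := sqrt_mul_sqrt_le _ _ (hu0 p) (hv0 p)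
    _ = 1/2 * (u p + v p) := by ring

lemma key_bound (hf : Continuous f) (hf01 : ∀ x, f x ∈ Set.Icc (0:ℝ) 1) (hκ : 0 < κ)
    (hd1 : d1F f κ c₁ c₂ = 0) (c : ℝ) :
    (d2F f κ c₁ c₂)^2 ≤ (Fk f 0 c 1)^2 := by
  have hJ := int_phi_pos hf hf01 hκ (c₁ := c₁) (c₂ := c₂)
  set J : ℝ := ∫ p, phi f κ c₁ c₂ p ∂Γm with hJdef
  have hsJ : (0:ℝ) < Real.sqrt J := Real.sqrt_pos.mpr hJ
  set b : ℝ := d2F f κ c₁ c₂ with hbdef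
  have hvT := int_vT_zero hf hf01 hκ hd1
  have hvZ := int_vZ_eq hf hf01 hκ (c₁ := c₁) (c₂ := c₂)
  have hFk0 : Fk f 0 c 1 = Real.sqrt (∫ p, phi f 0 c 1 p ∂Γm) := Fk_eq hf hf01
  have hFk0nn : 0 ≤ Fk f 0 c 1 := by rw [hFk0]; exact Real.sqrt_nonneg _
  have hsqm_k : AEStronglyMeasurable (fun p => Real.sqrt (phi f κ c₁ c₂ p)) Γm :=
    (Real.continuous_sqrt.comp (phi_cont hf)).aestronglyMeasurable
  rcases le_or_gt 0 b with hb | hb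
  · -- case b ≥ 0
    have hWint : Integrable (fun p => (-c) * vT f κ c₁ c₂ p - vZ f κ c₁ c₂ p) Γm :=
      ((integrable_vT hf hf01).const_mul (-c)).sub (integrable_vZ hf hf01)
    have hWval : ∫ p, ((-c) * vT f κ c₁ c₂ p - vZ f κ c₁ c₂ p) ∂Γm = b * Real.sqrt J := by
      rw [integral_sub ((integrable_vT hf hf01).const_mul (-c)) (integrable_vZ hf hf01),
        MeasureTheory.integral_const_mul, hvT, hvZ]
      ring
    have hpt : ∀ p : ℝ × ℝ, (-c) * vT f κ c₁ c₂ p - vZ f κ c₁ c₂ p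
        ≤ Real.sqrt (phi f κ c₁ c₂ p) * Real.sqrt (phi f 0 c 1 p) := by
      intro p
      have h1 := (hf01 p.1).1; have h2 := (hf01 p.1).2
      have e : (-c) * vT f κ c₁ c₂ p - vZ f κ c₁ c₂ p
          = f p.1 * max (κ - c₁ * p.1 - c₂ * p.2) 0 * (0 - c * p.1 - 1 * p.2)
            + (1 - f p.1) * max (κ + c₁ * p.1 - c₂ * p.2) 0 * (0 + c * p.1 - 1 * p.2) := by
        unfold vT vZ; ring
      have s1 : f p.1 * max (κ - c₁ * p.1 - c₂ * p.2) 0 * (0 - c * p.1 - 1 * p.2)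
          ≤ f p.1 * max (κ - c₁ * p.1 - c₂ * p.2) 0 * max (0 - c * p.1 - 1 * p.2) 0 :=
        mul_le_mul_of_nonneg_left (le_max_left _ _)
          (mul_nonneg h1 (le_max_right _ 0))
      have s2 : (1 - f p.1) * max (κ + c₁ * p.1 - c₂ * p.2) 0 * (0 + c * p.1 - 1 * p.2)
          ≤ (1 - f p.1) * max (κ + c₁ * p.1 - c₂ * p.2) 0 * max (0 + c * p.1 - 1 * p.2) 0 :=
        mul_le_mul_of_nonneg_left (le_max_left _ _)
          (mul_nonneg (by linarith) (le_max_right _ 0))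
      have hcs := weighted_CS h1 h2 (max (κ - c₁ * p.1 - c₂ * p.2) 0)
        (max (κ + c₁ * p.1 - c₂ * p.2) 0) (max (0 - c * p.1 - 1 * p.2) 0)
        (max (0 + c * p.1 - 1 * p.2) 0)
      rw [e]
      refine (add_le_add s1 s2).trans ?_
      exact hcs
    have hsqm_0 : AEStronglyMeasurable (fun p => Real.sqrt (phi f 0 c 1 p)) Γm :=
      (Real.continuous_sqrt.comp (phi_cont hf)).aestronglyMeasurable
    have hprodint : Integrable (fun p => Real.sqrt (phi f κ c₁ c₂ p) * Real.sqrt (phi f 0 c 1 p)) Γm :=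
      integrable_sqrtmul hf hf01 (integrable_phi hf hf01) (integrable_phi hf hf01)
        (phi_cont hf) (phi_cont hf) (phi_nonneg hf01) (phi_nonneg hf01)
    have hmono := integral_mono hWint hprodint hpt
    have hCS := CS_integral (integrable_phi hf hf01 (κ := κ) (c₁ := c₁) (c₂ := c₂))
      (integrable_phi hf hf01 (κ := 0) (c₁ := c) (c₂ := 1)) hsqm_k hsqm_0
      (phi_nonneg hf01) (phi_nonneg hf01)
    have hchain : b * Real.sqrt J ≤ Real.sqrt J * Fk f 0 c 1 := by
      rw [← hWval, hFk0]
      exact hmono.trans hCS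
    have hble : b ≤ Fk f 0 c 1 := by
      have := (mul_le_mul_iff_left₀ hsJ).mp (by linarith [hchain] : b * Real.sqrt J ≤ Fk f 0 c 1 * Real.sqrt J)
      exact this
    calc b^2 ≤ (Fk f 0 c 1)^2 := by nlinarith
      _ = _ := rfl
  · -- case b < 0
    have hWint : Integrable (fun p => vZ f κ c₁ c₂ p - c * vT f κ c₁ c₂ p) Γm :=
      (integrable_vZ hf hf01).sub ((integrable_vT hf hf01).const_mul c)
    have hWval : ∫ p, (vZ f κ c₁ c₂ p - c * vT f κ c₁ c₂ p) ∂Γm = -b * Real.sqrt J := by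
      rw [integral_sub (integrable_vZ hf hf01) ((integrable_vT hf hf01).const_mul c),
        MeasureTheory.integral_const_mul, hvT, hvZ]
      ring
    -- the symmetrized comparison function
    set Q : ℝ × ℝ → ℝ := fun p => f p.1 * (max (p.2 - c * p.1) 0)^2
      + (1 - f p.1) * (max (p.2 + c * p.1) 0)^2 with hQdef
    have hQcont : Continuous Q := by rw [hQdef]; fun_prop
    have hQ0 : ∀ p, 0 ≤ Q p := by
      intro p
      have h1 := (hf01 p.1).1; have h2 := (hf01 p.1).2
      have := sq_nonneg (max (p.2 - c * p.1) 0); have := sq_nonneg (max (p.2 + c * p.1) 0)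
      rw [hQdef]
      dsimp only
      nlinarith
    have hQint : Integrable Q Γm := by
      refine integrable_polybound hQcont.aestronglyMeasurable (6*(c^2+1)) (fun p => ?_)
      have h1 := (hf01 p.1).1; have h2 := (hf01 p.1).2
      have m1 : (max (p.2 - c * p.1) 0)^2 ≤ (p.2 - c * p.1)^2 := max_sq_le _
      have m2 : (max (p.2 + c * p.1) 0)^2 ≤ (p.2 + c * p.1)^2 := max_sq_le _
      have a1 : (p.2 - c * p.1)^2 ≤ (3*((0:ℝ)^2+(-c)^2+1^2)) * ((1+p.1^2)*(1+p.2^2)) := by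
        have h := affine_sq_bound 0 (-c) 1 p.1 p.2
        calc (p.2 - c * p.1)^2 = (0 + (-c)*p.1 + 1*p.2)^2 := by ring_nf
          _ ≤ _ := h
      have a2 : (p.2 + c * p.1)^2 ≤ (3*((0:ℝ)^2+c^2+1^2)) * ((1+p.1^2)*(1+p.2^2)) := by
        have h := affine_sq_bound 0 c 1 p.1 p.2
        calc (p.2 + c * p.1)^2 = (0 + c*p.1 + 1*p.2)^2 := by ring_nf
          _ ≤ _ := h
      rw [Real.norm_of_nonneg (hQ0 p), hQdef]
      dsimp only
      have hpr : (0:ℝ) ≤ (1+p.1^2)*(1+p.2^2) := by positivity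
      nlinarith [sq_nonneg (max (p.2 - c * p.1) 0), sq_nonneg (max (p.2 + c * p.1) 0)]
    have hQeq : ∫ p, Q p ∂Γm = ∫ p, phi f 0 c 1 p ∂Γm := by
      have e1 : ∫ p, Q p ∂Γm = ∫ g, ∫ z, Q (g, z) ∂stdG ∂stdG :=
        (integral_integral (f := fun g z => Q (g, z)) hQint).symm
      have e2 : ∫ p, phi f 0 c 1 p ∂Γm = ∫ g, ∫ z, phi f 0 c 1 (g, z) ∂stdG ∂stdG :=
        (integral_integral (f := fun g z => phi f 0 c 1 (g, z)) (integrable_phi hf hf01)).symm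
      rw [e1, e2]
      apply integral_congr_ae
      refine Filter.Eventually.of_forall (fun g => ?_)
      have hsym : ∫ z, phi f 0 c 1 (g, -z) ∂stdG = ∫ z, phi f 0 c 1 (g, z) ∂stdG :=
        integral_comp_neg_stdG (fun z => phi f 0 c 1 (g, z))
          ((phi_cont hf).comp (Continuous.prodMk_right g)).aestronglyMeasurable
      show ∫ z, Q (g, z) ∂stdG = ∫ z, phi f 0 c 1 (g, z) ∂stdG
      rw [← hsym]
      apply integral_congr_ae
      refine Filter.Eventually.of_forall (fun z => ?_)
      show Q (g, z) = phi f 0 c 1 (g, -z)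
      rw [hQdef]
      unfold phi
      dsimp only
      rw [show (0 - c * g - 1 * (-z)) = z - c * g by ring,
        show (0 + c * g - 1 * (-z)) = z + c * g by ring]
    have hpt : ∀ p : ℝ × ℝ, vZ f κ c₁ c₂ p - c * vT f κ c₁ c₂ p
        ≤ Real.sqrt (phi f κ c₁ c₂ p) * Real.sqrt (Q p) := by
      intro p
      have h1 := (hf01 p.1).1; have h2 := (hf01 p.1).2
      have e : vZ f κ c₁ c₂ p - c * vT f κ c₁ c₂ p
          = f p.1 * max (κ - c₁ * p.1 - c₂ * p.2) 0 * (p.2 - c * p.1)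
            + (1 - f p.1) * max (κ + c₁ * p.1 - c₂ * p.2) 0 * (p.2 + c * p.1) := by
        unfold vT vZ; ring
      have s1 : f p.1 * max (κ - c₁ * p.1 - c₂ * p.2) 0 * (p.2 - c * p.1)
          ≤ f p.1 * max (κ - c₁ * p.1 - c₂ * p.2) 0 * max (p.2 - c * p.1) 0 :=
        mul_le_mul_of_nonneg_left (le_max_left _ _) (mul_nonneg h1 (le_max_right _ 0))
      have s2 : (1 - f p.1) * max (κ + c₁ * p.1 - c₂ * p.2) 0 * (p.2 + c * p.1)
          ≤ (1 - f p.1) * max (κ + c₁ * p.1 - c₂ * p.2) 0 * max (p.2 + c * p.1) 0 :=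
        mul_le_mul_of_nonneg_left (le_max_left _ _) (mul_nonneg (by linarith) (le_max_right _ 0))
      have hcs := weighted_CS h1 h2 (max (κ - c₁ * p.1 - c₂ * p.2) 0)
        (max (κ + c₁ * p.1 - c₂ * p.2) 0) (max (p.2 - c * p.1) 0) (max (p.2 + c * p.1) 0)
      rw [e]
      exact (add_le_add s1 s2).trans hcs
    have hsqm_Q : AEStronglyMeasurable (fun p => Real.sqrt (Q p)) Γm :=
      (Real.continuous_sqrt.comp hQcont).aestronglyMeasurable
    have hprodint : Integrable (fun p => Real.sqrt (phi f κ c₁ c₂ p) * Real.sqrt (Q p)) Γm :=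
      integrable_sqrtmul hf hf01 (integrable_phi hf hf01) hQint (phi_cont hf) hQcont
        (phi_nonneg hf01) hQ0
    have hmono := integral_mono hWint hprodint hpt
    have hCS := CS_integral (integrable_phi hf hf01 (κ := κ) (c₁ := c₁) (c₂ := c₂)) hQint
      hsqm_k hsqm_Q (phi_nonneg hf01) hQ0
    have hchain : -b * Real.sqrt J ≤ Real.sqrt J * Fk f 0 c 1 := by
      rw [← hWval, hFk0, ← hQeq]
      exact hmono.trans hCS
    have hble : -b ≤ Fk f 0 c 1 := by
      have := (mul_le_mul_iff_left₀ hsJ).mp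
        (by linarith [hchain] : (-b) * Real.sqrt J ≤ Fk f 0 c 1 * Real.sqrt J)
      exact this
    nlinarith


/-- If `ψ > ψ*(0)` and `(c₁,c₂,s)` solves the system on `Q∞ = N(0,1) ⊗ μ` with `c₂ ≠ 0`,
then `s ≠ 0`. -/
theorem statement_6 (f : ℝ → ℝ) (hf : Continuous f) (hf01 : ∀ x, f x ∈ Set.Icc (0:ℝ) 1)
    (ρ : ℝ) (hρ : 0 < ρ) (hnd : NonDeg (fun x => f (ρ * x)))
    (μ : Measure (ℝ × ℝ)) [IsProbabilityMeasure μ]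
    (xmin xmax : ℝ) (hxmin : 0 < xmin) (hxx : xmin ≤ xmax)
    (hsupp : ∀ᵐ q ∂μ, q.1 ∈ Set.Icc xmin xmax)
    (hw2 : ∫ q, q.2 ^ 2 ∂μ = 1)
    (κ : ℝ) (hκ : 0 < κ)
    (ψ : ℝ) (hψ : psiStar0 (fun x => f (ρ * x)) < ψ)
    (c₁ c₂ s : ℝ)
    (hsol : SolSysG (fun x => f (ρ * x)) (stdG.prod μ) ψ κ c₁ c₂ s)
    (hc₂ : c₂ ≠ 0) :
    s ≠ 0 := by

  intro hs0
  subst hs0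
  have hFc : Continuous (fun x => f (ρ * x)) := hf.comp (continuous_const.mul continuous_id)
  have hF01 : ∀ x, (fun x => f (ρ * x)) x ∈ Set.Icc (0:ℝ) 1 := fun x => hf01 _
  obtain ⟨e1, e2, e3⟩ := hsol
  set a : ℝ := d1F (fun x => f (ρ * x)) κ c₁ c₂ with hadef
  set b : ℝ := d2F (fun x => f (ρ * x)) κ c₁ c₂ with hbdef
  simp only [mul_zero, zero_mul, add_zero] at e1 e2 e3
  have hpsi0 : (0:ℝ) ≤ psiStar0 (fun x => f (ρ * x)) :=
    le_ciInf (fun c => sq_nonneg _)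
  have hψpos : 0 < ψ := lt_of_le_of_lt hpsi0 hψ
  have hψsq : Real.sqrt ψ ^ 2 = ψ := Real.sq_sqrt hψpos.le
  by_cases hb0 : b = 0
  · rw [hb0] at e3
    simp only [mul_zero, zero_mul, ne_eq, OfNat.ofNat_ne_zero, not_false_eq_true,
      zero_pow, div_zero, integral_zero] at e3
    exact one_ne_zero e3
  · -- b ≠ 0
    have hk : c₂⁻¹ * b ≠ 0 := mul_ne_zero (inv_ne_zero hc₂) hb0
    -- a.e. bounds on X
    have hXae : ∀ᵐ q ∂(stdG.prod μ), q.2.1 ∈ Set.Icc xmin xmax := by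
      have hN : μ {r : ℝ × ℝ | ¬ r.1 ∈ Set.Icc xmin xmax} = 0 := ae_iff.mp hsupp
      have hms : MeasurableSet {r : ℝ × ℝ | ¬ r.1 ∈ Set.Icc xmin xmax} :=
        (measurable_fst measurableSet_Icc).compl
      have hmap : (stdG.prod μ).map Prod.snd = μ := by
        rw [show (stdG.prod μ).map Prod.snd = (stdG.prod μ).snd from rfl]
        exact Measure.snd_prod
      rw [ae_iff]
      have hset : {q : Pt | ¬ q.2.1 ∈ Set.Icc xmin xmax}
          = Prod.snd ⁻¹' {r : ℝ × ℝ | ¬ r.1 ∈ Set.Icc xmin xmax} := rfl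
      rw [hset, ← Measure.map_apply measurable_snd hms, hmap]
      exact hN
    -- integrabilities over μ and over the product
    have hw2int : Integrable (fun r : ℝ × ℝ => r.2 ^ 2) μ := by
      by_contra h
      rw [integral_undef h] at hw2
      exact one_ne_zero hw2.symm
    have hwint : Integrable (fun r : ℝ × ℝ => r.2) μ := by
      refine ((integrable_const (1:ℝ)).add hw2int).mono'
        measurable_snd.aestronglyMeasurable (Filter.Eventually.of_forall (fun r => ?_))
      simp only [Pi.add_apply]
      rw [Real.norm_eq_abs]
      nlinarith [sq_abs r.2, abs_nonneg r.2]
    have hGW : Integrable (fun q : Pt => q.1 * q.2.2) (stdG.prod μ) :=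
      integrable_id_stdG.mul_prod hwint
    have hW2Q : Integrable (fun q : Pt => q.2.2 ^ 2) (stdG.prod μ) := by
      have h := (integrable_const (1:ℝ) (μ := stdG)).mul_prod hw2int
      exact h.congr (Filter.Eventually.of_forall (fun q => by simp))
    have hG2Q : Integrable (fun q : Pt => q.1 ^ 2) (stdG.prod μ) := by
      have h := integrable_sq_stdG.mul_prod (integrable_const (1:ℝ) (μ := μ))
      exact h.congr (Filter.Eventually.of_forall (fun q => by simp))
    have hGWval : ∫ q : Pt, q.1 * q.2.2 ∂(stdG.prod μ) = 0 := by
      rw [integral_prod_mul (fun x : ℝ => x) (fun r : ℝ × ℝ => r.2), integral_id_stdG, zero_mul]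
    have hW2val : ∫ q : Pt, q.2.2 ^ 2 ∂(stdG.prod μ) = 1 := by
      have : ∫ q : Pt, q.2.2 ^ 2 ∂(stdG.prod μ)
          = ∫ q : Pt, (1:ℝ) * q.2.2 ^ 2 ∂(stdG.prod μ) := by
        apply integral_congr_ae; exact Filter.Eventually.of_forall (fun q => by ring)
      rw [this, integral_prod_mul (fun _ : ℝ => (1:ℝ)) (fun r : ℝ × ℝ => r.2 ^ 2), hw2]
      simp
    have hG2val : ∫ q : Pt, q.1 ^ 2 ∂(stdG.prod μ) = 1 := by
      have : ∫ q : Pt, q.1 ^ 2 ∂(stdG.prod μ)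
          = ∫ q : Pt, q.1 ^ 2 * (1:ℝ) ∂(stdG.prod μ) := by
        apply integral_congr_ae; exact Filter.Eventually.of_forall (fun q => by ring)
      rw [this, integral_prod_mul (fun x : ℝ => x ^ 2) (fun _ : ℝ × ℝ => (1:ℝ)), integral_sq_stdG]
      simp
    -- rewrite equation 1
    have hae1 : ∀ᵐ q ∂(stdG.prod μ),
        (Real.sqrt ψ * Gc q + (a - c₁ * c₂⁻¹ * b) * Wc q) * Wc q * Real.sqrt (Xc q)
          / (c₂⁻¹ * b * Real.sqrt (Xc q))
        = (Real.sqrt ψ * (c₂⁻¹ * b)⁻¹) * (q.1 * q.2.2)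
          + ((a - c₁ * c₂⁻¹ * b) * (c₂⁻¹ * b)⁻¹) * q.2.2 ^ 2 := by
      filter_upwards [hXae] with q hq
      have hx : (0:ℝ) < q.2.1 := lt_of_lt_of_le hxmin hq.1
      have hsx : Real.sqrt (Xc q) ≠ 0 := by
        simp only [Xc]
        exact (Real.sqrt_pos.mpr hx).ne'
      simp only [Gc, Wc, Xc] at *
      field_simp
    rw [integral_congr_ae hae1] at e1
    rw [integral_add ((hGW.const_mul _)) ((hW2Q.const_mul _)),
      MeasureTheory.integral_const_mul, MeasureTheory.integral_const_mul,
      hGWval, hW2val] at e1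
    have ha0 : a = 0 := by
      have e1' : -c₁ = (a - c₁ * c₂⁻¹ * b) * (c₂⁻¹ * b)⁻¹ := by rw [e1]; ring
      have h1 := congrArg (fun t => t * (c₂⁻¹ * b)) e1'
      simp only [mul_assoc, inv_mul_cancel₀ hk, mul_one] at h1
      have h2 : c₁ * c₂⁻¹ * b = c₁ * (c₂⁻¹ * b) := by ring
      nlinarith [h1, h2]
    -- rewrite equation 2
    have hae2 : ∀ᵐ q ∂(stdG.prod μ),
        (Real.sqrt ψ * Gc q + (a - c₁ * c₂⁻¹ * b) * Wc q) ^ 2 * Xc q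
          / (c₂⁻¹ * b * Real.sqrt (Xc q)) ^ 2
        = (ψ * ((c₂⁻¹ * b) ^ 2)⁻¹) * q.1 ^ 2
          + ((2 * Real.sqrt ψ * (a - c₁ * c₂⁻¹ * b)) * ((c₂⁻¹ * b) ^ 2)⁻¹) * (q.1 * q.2.2)
          + (((a - c₁ * c₂⁻¹ * b) ^ 2) * ((c₂⁻¹ * b) ^ 2)⁻¹) * q.2.2 ^ 2 := by
      filter_upwards [hXae] with q hq
      have hx : (0:ℝ) < q.2.1 := lt_of_lt_of_le hxmin hq.1
      simp only [Gc, Wc, Xc] at *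
      rw [show (Real.sqrt ψ * q.1 + (a - c₁ * c₂⁻¹ * b) * q.2.2) ^ 2
          = Real.sqrt ψ ^ 2 * q.1 ^ 2
            + 2 * Real.sqrt ψ * (a - c₁ * c₂⁻¹ * b) * (q.1 * q.2.2)
            + (a - c₁ * c₂⁻¹ * b) ^ 2 * q.2.2 ^ 2 from by ring, hψsq]
      rw [mul_pow, Real.sq_sqrt hx.le]
      field_simp
    rw [integral_congr_ae hae2] at e2
    have hf12 : Integrable (fun q : Pt =>
        ψ * ((c₂⁻¹ * b) ^ 2)⁻¹ * q.1 ^ 2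
          + 2 * Real.sqrt ψ * (a - c₁ * c₂⁻¹ * b) * ((c₂⁻¹ * b) ^ 2)⁻¹ * (q.1 * q.2.2))
        (stdG.prod μ) := (hG2Q.const_mul _).add (hGW.const_mul _)
    rw [integral_add hf12 ((hW2Q.const_mul _)),
      integral_add ((hG2Q.const_mul _)) ((hGW.const_mul _)),
      MeasureTheory.integral_const_mul, MeasureTheory.integral_const_mul,
      MeasureTheory.integral_const_mul, hG2val, hGWval, hW2val] at e2
    -- derive ψ = b ^ 2
    have hψb : ψ = b ^ 2 := by
      rw [ha0] at e2
      field_simp at e2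
      have hc2sq : 0 < c₂ ^ 2 := by
        have := mul_self_pos.mpr hc₂
        nlinarith
      have h3 : c₂ ^ 2 * b ^ 2 = c₂ ^ 2 * ψ := by linear_combination e2
      exact (mul_left_cancel₀ (ne_of_gt hc2sq) h3).symm
    -- contradiction with key bound
    have hd1 : d1F (fun x => f (ρ * x)) κ c₁ c₂ = 0 := by rw [← hadef]; exact ha0
    have hkey : ∀ c : ℝ, b ^ 2 ≤ (Fk (fun x => f (ρ * x)) 0 c 1) ^ 2 :=
      fun c => key_bound hFc hF01 hκ hd1 c
    have hinf : b ^ 2 ≤ psiStar0 (fun x => f (ρ * x)) := le_ciInf hkey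
    rw [hψb] at hψ
    linarith



end MaxMargin
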